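/- Let V be a finite set of 2D rational vectors where each v has either (v₁ > 0 and v₂ > v₁) or (v₁ > 0 and v₂ = 0). Construct tasks: for v with v₂ > v₁, τ_v = (C = v₂, T = v₂/v₁, D = 1); let H be a common positive integer multiple of the periods v₂/v₁ of these tasks; for v with v₂ = 0, τ_v = (C = v₁·H, T = H, D = H). Then a subset V' ⊆ V can be feasibly packed in one bin (Σ_{v∈V'} v₁ ≤ 1 and Σ_{v∈V'} v₂ ≤ 1) if and only if the corresponding task set {τ_v : v ∈ V'} is EDF-feasible on one processor (Σ dbf(τ_v, t) ≤ t for all t ≥ 0). -/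

import Mathlib

/-- Demand bound function of a sporadic task (C, T, D) at time t. -/
noncomputable def dbf (C T D t : ℝ) : ℝ := ((max 0 (⌊(t - D) / T⌋ + 1) : ℤ) : ℝ) * C

/-- Execution time of the task built from the vector (v₁ i, v₂ i). -/
noncomputable def vecC (v₁ v₂ : ι → ℚ) (H : ℝ) (i : ι) : ℝ :=
  if v₂ i = 0 then (v₁ i : ℝ) * H else (v₂ i : ℝ)

/-- Period of the task built from the vector (v₁ i, v₂ i). -/
noncomputable def vecT (v₁ v₂ : ι → ℚ) (H : ℝ) (i : ι) : ℝ :=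
  if v₂ i = 0 then H else (v₂ i : ℝ) / (v₁ i : ℝ)

/-- Relative deadline of the task built from the vector (v₁ i, v₂ i). -/
noncomputable def vecD (v₁ v₂ : ι → ℚ) (H : ℝ) (i : ι) : ℝ :=
  if v₂ i = 0 then H else 1

lemma dbf_nonneg {C T D t : ℝ} (hC : 0 ≤ C) : 0 ≤ dbf C T D t := by
  unfold dbf
  apply mul_nonneg _ hC
  exact_mod_cast le_max_left (0 : ℤ) _

lemma dbf_eq_zero {C T D t : ℝ} (hT : 0 < T) (ht : t < D) : dbf C T D t = 0 := by
  unfold dbf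
  have h1 : (t - D) / T < 0 := div_neg_of_neg_of_pos (by linarith) hT
  have h2 : ⌊(t - D) / T⌋ < 0 := by
    rw [show (0 : ℤ) = ((0 : ℤ)) from rfl]
    exact Int.floor_lt.mpr (by exact_mod_cast h1)
  have : max 0 (⌊(t - D) / T⌋ + 1) = 0 := by omega
  rw [this]
  simp

/-- Splitting lemma for type-A tasks (vectors with v₂ > v₁ > 0). -/
lemma dbfA_split (a b H : ℝ) (ha : 0 < a) (hab : a < b) (k : ℕ) (hk : 1 ≤ k)
    (hH : H = k * (b / a)) (m : ℤ) (hm : 0 ≤ m) (r : ℝ) (hr : 0 ≤ r) :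
    dbf b (b / a) 1 ((m : ℝ) * H + r) = (m : ℝ) * (a * H) + dbf b (b / a) 1 r := by
  have hb : 0 < b := ha.trans hab
  have hT : (1 : ℝ) < b / a := (one_lt_div ha).mpr hab
  have hT0 : (0 : ℝ) < b / a := by linarith
  have hkb : a * H = k * b := by
    rw [hH]; field_simp
  have key : ((m : ℝ) * H + r - 1) / (b / a) = (r - 1) / (b / a) + ((m * k : ℤ) : ℝ) := by
    rw [hH]
    push_cast
    field_simp
    ring
  have hfl : (-1 : ℤ) ≤ ⌊(r - 1) / (b / a)⌋ := by
    apply Int.le_floor.mpr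
    push_cast
    rw [le_div_iff₀ hT0]
    nlinarith
  have hmk : (0 : ℤ) ≤ m * k := mul_nonneg hm (by positivity)
  unfold dbf
  rw [key, Int.floor_add_intCast]
  have h1 : max 0 (⌊(r - 1) / (b / a)⌋ + m * k + 1) = (⌊(r - 1) / (b / a)⌋ + 1) + m * k := by
    omega
  have h2 : max 0 (⌊(r - 1) / (b / a)⌋ + 1) = ⌊(r - 1) / (b / a)⌋ + 1 := by omega
  rw [h1, h2]
  push_cast
  rw [mul_comm ((m : ℝ)) (a * H), hkb]
  ring

/-- Value lemma for type-B tasks (vectors with v₂ = 0). -/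
lemma dbfB_val (a H : ℝ) (hH : 0 < H) (m : ℤ) (hm : 0 ≤ m) (r : ℝ) (hr : 0 ≤ r)
    (hrH : r < H) :
    dbf (a * H) H H ((m : ℝ) * H + r) = (m : ℝ) * (a * H) := by
  unfold dbf
  have key : ((m : ℝ) * H + r - H) / H = r / H + ((m - 1 : ℤ) : ℝ) := by
    field_simp
    push_cast
    ring
  rw [key, Int.floor_add_intCast]
  have h0 : ⌊r / H⌋ = 0 :=
    Int.floor_eq_zero_iff.mpr ⟨div_nonneg hr hH.le, (div_lt_one hH).mpr hrH⟩
  rw [h0]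
  have : max 0 (0 + (m - 1) + 1) = m := by omega
  rw [this]

/-- Linear bound on the dbf of a type-A task, for r ≥ 1. -/
lemma dbfA_bound (a b r : ℝ) (ha : 0 < a) (hab : a < b) (hr : 1 ≤ r) :
    dbf b (b / a) 1 r ≤ (r - 1) * a + b := by
  have hb : 0 < b := ha.trans hab
  have hT0 : (0 : ℝ) < b / a := div_pos hb ha
  unfold dbf
  have h1 : (0 : ℤ) ≤ ⌊(r - 1) / (b / a)⌋ :=
    Int.floor_nonneg.mpr (div_nonneg (by linarith) hT0.le)
  rw [max_eq_right (by omega : (0:ℤ) ≤ ⌊(r - 1) / (b / a)⌋ + 1)]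
  have h2 : ((⌊(r - 1) / (b / a)⌋ + 1 : ℤ) : ℝ) ≤ (r - 1) / (b / a) + 1 := by
    push_cast
    linarith [Int.floor_le ((r - 1) / (b / a))]
  calc ((⌊(r - 1) / (b / a)⌋ + 1 : ℤ) : ℝ) * b ≤ ((r - 1) / (b / a) + 1) * b :=
        mul_le_mul_of_nonneg_right h2 hb.le
    _ = (r - 1) * a + b := by
        field_simp

/-- Value of a type-A task's dbf at t = 1. -/
lemma dbfA_at_one (a b : ℝ) (ha : 0 < a) (hab : a < b) :
    dbf b (b / a) 1 1 = b := by
  unfold dbf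
  norm_num

theorem bin_packing_iff_EDF_feasible {ι : Type*} (V : Finset ι)
    (v₁ v₂ : ι → ℚ)
    (hvec : ∀ i ∈ V, 0 < v₁ i ∧ (v₁ i < v₂ i ∨ v₂ i = 0))
    (H : ℝ) (hH : 0 < H)
    (hmul : ∀ i ∈ V, v₁ i < v₂ i → ∃ k : ℕ, 1 ≤ k ∧ H = k * ((v₂ i : ℝ) / (v₁ i : ℝ))) :
    ∀ V' ⊆ V,
      ((∑ i ∈ V', (v₁ i : ℝ)) ≤ 1 ∧ (∑ i ∈ V', (v₂ i : ℝ)) ≤ 1) ↔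
      (∀ t : ℝ, 0 ≤ t →
        ∑ i ∈ V', dbf (vecC v₁ v₂ H i) (vecT v₁ v₂ H i) (vecD v₁ v₂ H i) t ≤ t) := by
  intro V' hV'
  have hpos : ∀ i ∈ V', (0 : ℝ) < (v₁ i : ℝ) := fun i hi => by
    exact_mod_cast (hvec i (hV' hi)).1
  -- value of each task's dbf at t = H
  have hatH : ∀ i ∈ V',
      dbf (vecC v₁ v₂ H i) (vecT v₁ v₂ H i) (vecD v₁ v₂ H i) H = (v₁ i : ℝ) * H := by
    intro i hi
    by_cases h0 : v₂ i = 0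
    · simp only [vecC, vecT, vecD, if_pos h0]
      have := dbfB_val (v₁ i : ℝ) H hH 0 le_rfl 0 le_rfl hH
      have h2 := dbfB_val (v₁ i : ℝ) H hH 1 (by norm_num) 0 le_rfl hH
      simpa using h2
    · obtain ⟨h1, h2⟩ := hvec i (hV' hi)
      have hab : (v₁ i : ℝ) < (v₂ i : ℝ) := by exact_mod_cast h2.resolve_right h0
      have ha : (0 : ℝ) < (v₁ i : ℝ) := hpos i hi
      obtain ⟨k, hk1, hk2⟩ := hmul i (hV' hi) (by exact_mod_cast hab)
      simp only [vecC, vecT, vecD, if_neg h0]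
      have hT0 : (0 : ℝ) < (v₂ i : ℝ) / (v₁ i : ℝ) := div_pos (by linarith) ha
      have hz : dbf (v₂ i : ℝ) ((v₂ i : ℝ) / (v₁ i : ℝ)) 1 0 = 0 :=
        dbf_eq_zero hT0 (by norm_num)
      have := dbfA_split (v₁ i : ℝ) (v₂ i : ℝ) H ha hab k hk1 hk2 1 (by norm_num) 0 le_rfl
      rw [hz] at this
      simpa using this
  constructor
  · rintro ⟨h1, h2⟩ t ht
    set m := ⌊t / H⌋ with hm_def
    have hm0 : 0 ≤ m := Int.floor_nonneg.mpr (div_nonneg ht hH.le)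
    set r := t - (m : ℝ) * H with hr_def
    have hr0 : 0 ≤ r := by
      have h : ((m : ℝ)) ≤ t / H := by
        rw [hm_def]; exact Int.floor_le (t / H)
      have := (le_div_iff₀ hH).mp h
      simp only [hr_def]; linarith
    have hrH : r < H := by
      have h : t / H < (m : ℝ) + 1 := by
        rw [hm_def]; exact_mod_cast Int.lt_floor_add_one (t / H)
      have := (div_lt_iff₀ hH).mp h
      simp only [hr_def]; nlinarith
    have ht_eq : t = (m : ℝ) * H + r := by simp [hr_def]
    have hsplit : ∀ i ∈ V',
        dbf (vecC v₁ v₂ H i) (vecT v₁ v₂ H i) (vecD v₁ v₂ H i) t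
          = (m : ℝ) * ((v₁ i : ℝ) * H)
            + dbf (vecC v₁ v₂ H i) (vecT v₁ v₂ H i) (vecD v₁ v₂ H i) r := by
      intro i hi
      by_cases h0 : v₂ i = 0
      · simp only [vecC, vecT, vecD, if_pos h0]
        rw [ht_eq, dbfB_val _ _ hH m hm0 r hr0 hrH, dbf_eq_zero hH hrH]
        ring
      · obtain ⟨ha1, ha2⟩ := hvec i (hV' hi)
        have hab : (v₁ i : ℝ) < (v₂ i : ℝ) := by exact_mod_cast ha2.resolve_right h0
        have ha : (0 : ℝ) < (v₁ i : ℝ) := hpos i hi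
        obtain ⟨k, hk1, hk2⟩ := hmul i (hV' hi) (by exact_mod_cast hab)
        simp only [vecC, vecT, vecD, if_neg h0]
        rw [ht_eq]
        exact dbfA_split _ _ _ ha hab k hk1 hk2 m hm0 r hr0
    rw [Finset.sum_congr rfl hsplit, Finset.sum_add_distrib]
    have hsum1 : ∑ i ∈ V', (m : ℝ) * ((v₁ i : ℝ) * H)
        = (m : ℝ) * H * ∑ i ∈ V', (v₁ i : ℝ) := by
      rw [Finset.mul_sum]
      apply Finset.sum_congr rfl
      intro i _
      ring
    have hmH : (0 : ℝ) ≤ (m : ℝ) * H := by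
      apply mul_nonneg _ hH.le
      exact_mod_cast hm0
    have hsum_r : ∑ i ∈ V',
        dbf (vecC v₁ v₂ H i) (vecT v₁ v₂ H i) (vecD v₁ v₂ H i) r ≤ r := by
      by_cases hr1 : r < 1
      · have hz : ∀ i ∈ V',
            dbf (vecC v₁ v₂ H i) (vecT v₁ v₂ H i) (vecD v₁ v₂ H i) r = 0 := by
          intro i hi
          by_cases h0 : v₂ i = 0
          · simp only [vecC, vecT, vecD, if_pos h0]
            exact dbf_eq_zero hH hrH
          · obtain ⟨ha1, ha2⟩ := hvec i (hV' hi)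
            have hab : (v₁ i : ℝ) < (v₂ i : ℝ) := by exact_mod_cast ha2.resolve_right h0
            have ha : (0 : ℝ) < (v₁ i : ℝ) := hpos i hi
            simp only [vecC, vecT, vecD, if_neg h0]
            exact dbf_eq_zero (div_pos (by linarith) ha) hr1
        rw [Finset.sum_congr rfl hz]
        simpa using hr0
      · push_neg at hr1
        have hb : ∀ i ∈ V',
            dbf (vecC v₁ v₂ H i) (vecT v₁ v₂ H i) (vecD v₁ v₂ H i) r
              ≤ (r - 1) * (v₁ i : ℝ) + (v₂ i : ℝ) := by
          intro i hi
          by_cases h0 : v₂ i = 0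
          · simp only [vecC, vecT, vecD, if_pos h0]
            rw [dbf_eq_zero hH hrH]
            have ha : (0 : ℝ) < (v₁ i : ℝ) := hpos i hi
            have : (v₂ i : ℝ) = 0 := by exact_mod_cast h0
            nlinarith
          · obtain ⟨ha1, ha2⟩ := hvec i (hV' hi)
            have hab : (v₁ i : ℝ) < (v₂ i : ℝ) := by exact_mod_cast ha2.resolve_right h0
            have ha : (0 : ℝ) < (v₁ i : ℝ) := hpos i hi
            simp only [vecC, vecT, vecD, if_neg h0]
            exact dbfA_bound _ _ _ ha hab hr1
        calc ∑ i ∈ V', dbf (vecC v₁ v₂ H i) (vecT v₁ v₂ H i) (vecD v₁ v₂ H i) r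
            ≤ ∑ i ∈ V', ((r - 1) * (v₁ i : ℝ) + (v₂ i : ℝ)) := Finset.sum_le_sum hb
          _ = (r - 1) * (∑ i ∈ V', (v₁ i : ℝ)) + ∑ i ∈ V', (v₂ i : ℝ) := by
              rw [Finset.sum_add_distrib, Finset.mul_sum]
          _ ≤ (r - 1) * 1 + 1 := by
              have := mul_le_mul_of_nonneg_left h1 (by linarith : (0:ℝ) ≤ r - 1)
              linarith
          _ = r := by ring
    rw [hsum1]
    have : (m : ℝ) * H * ∑ i ∈ V', (v₁ i : ℝ) ≤ (m : ℝ) * H :=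
      calc (m : ℝ) * H * ∑ i ∈ V', (v₁ i : ℝ) ≤ (m : ℝ) * H * 1 :=
            mul_le_mul_of_nonneg_left h1 hmH
        _ = (m : ℝ) * H := by ring
    linarith
  · intro hfeas
    constructor
    · have h := hfeas H hH.le
      rw [Finset.sum_congr rfl hatH, ← Finset.sum_mul] at h
      have := le_of_mul_le_mul_right (by linarith : (∑ i ∈ V', (v₁ i : ℝ)) * H ≤ 1 * H) hH
      linarith
    · have h := hfeas 1 zero_le_one
      have hle : ∑ i ∈ V', (v₂ i : ℝ)
          ≤ ∑ i ∈ V', dbf (vecC v₁ v₂ H i) (vecT v₁ v₂ H i) (vecD v₁ v₂ H i) 1 := by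
        apply Finset.sum_le_sum
        intro i hi
        by_cases h0 : v₂ i = 0
        · have hb0 : (v₂ i : ℝ) = 0 := by exact_mod_cast h0
          rw [hb0]
          apply dbf_nonneg
          simp only [vecC, if_pos h0]
          exact mul_nonneg (hpos i hi).le hH.le
        · obtain ⟨ha1, ha2⟩ := hvec i (hV' hi)
          have hab : (v₁ i : ℝ) < (v₂ i : ℝ) := by exact_mod_cast ha2.resolve_right h0
          have ha : (0 : ℝ) < (v₁ i : ℝ) := hpos i hi
          simp only [vecC, vecT, vecD, if_neg h0]
          rw [dbfA_at_one _ _ ha hab]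
      linarith
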